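/- Let S ⊂ ℝⁿ be a (U,m)-set with unit cell U of diameter d and point packing coefficient c(S) = (Vol(U)/(m·Vₙ))^{1/n}. Then for any point p ∈ S and any k ≥ 1, the distance d_k(S;p) from p to its k-th nearest neighbour in S satisfies c(S)·k^{1/n} − d < d_k(S;p) ≤ c(S)·k^{1/n} + d. -/

import Mathlib

open Metric Set MeasureTheory

/-- The `k`-th nearest neighbour distance from `p` to the set `X` (excluding `p` itself). -/
noncomputable def kthNNDist {E : Type*} [MetricSpace E] (X : Set E) (p : E) (k : ℕ) : ℝ :=
  sInf {r : ℝ | k ≤ Nat.card ↥((X \ {p}) ∩ Metric.closedBall p r)}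

/-- The lattice generated by a basis `b` of `ℝⁿ`: all integer linear combinations. -/
def latticeOf {n : ℕ} (b : Module.Basis (Fin n) ℝ (EuclideanSpace ℝ (Fin n))) :
    Set (EuclideanSpace ℝ (Fin n)) :=
  {x | ∃ c : Fin n → ℤ, x = ∑ i, (c i : ℝ) • b i}

/-- The unit cell of the basis `b`. -/
def unitCellOf {n : ℕ} (b : Module.Basis (Fin n) ℝ (EuclideanSpace ℝ (Fin n))) :
    Set (EuclideanSpace ℝ (Fin n)) :=
  {x | ∀ i, b.repr x i ∈ Set.Ico (0 : ℝ) 1}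

section Aux
open Submodule
open scoped ENNReal

variable {n : ℕ} (b : Module.Basis (Fin n) ℝ (EuclideanSpace ℝ (Fin n)))

lemma unitCell_eq : unitCellOf b = ZSpan.fundamentalDomain b := rfl

lemma lattice_eq : latticeOf b = ↑(span ℤ (Set.range ⇑b)) := by
  ext x
  rw [SetLike.mem_coe, mem_span_range_iff_exists_fun]
  constructor
  · rintro ⟨c, rfl⟩
    exact ⟨c, by simp [← Int.cast_smul_eq_zsmul ℝ]⟩
  · rintro ⟨c, hc⟩
    exact ⟨c, by rw [← hc]; simp [← Int.cast_smul_eq_zsmul ℝ]⟩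

lemma mem_cell_iff {v x : EuclideanSpace ℝ (Fin n)} :
    x ∈ (v + ·) '' unitCellOf b ↔ x - v ∈ unitCellOf b := by
  constructor
  · rintro ⟨u, hu, rfl⟩; simpa using hu
  · intro h; exact ⟨x - v, h, by simp⟩

lemma cell_partition (x : EuclideanSpace ℝ (Fin n)) :
    ∃! v, v ∈ latticeOf b ∧ x ∈ (v + ·) '' unitCellOf b := by
  obtain ⟨v, hv, huniq⟩ := ZSpan.exist_unique_vadd_mem_fundamentalDomain b x
  refine ⟨-↑v, ⟨?_, ?_⟩, ?_⟩
  · rw [lattice_eq]; exact neg_mem v.2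
  · rw [mem_cell_iff]
    have : (↑v : EuclideanSpace ℝ (Fin n)) + x ∈ ZSpan.fundamentalDomain b := hv
    rw [unitCell_eq]
    convert this using 1; abel
  · rintro w ⟨hwL, hwx⟩
    rw [lattice_eq] at hwL
    rw [mem_cell_iff, unitCell_eq] at hwx
    have : (⟨-w, neg_mem hwL⟩ : span ℤ (Set.range ⇑b)) = v := by
      apply huniq
      show -w + x ∈ _
      rw [sub_eq_neg_add] at hwx
      exact hwx
    have h2 := congrArg (fun y : span ℤ (Set.range ⇑b) => -(y : EuclideanSpace ℝ (Fin n))) this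
    simpa using h2

lemma cell_dist_le {v x y : EuclideanSpace ℝ (Fin n)} (hx : x ∈ (v + ·) '' unitCellOf b)
    (hy : y ∈ (v + ·) '' unitCellOf b) : dist x y ≤ Metric.diam (unitCellOf b) := by
  rw [mem_cell_iff] at hx hy
  have : dist x y = dist (x - v) (y - v) := (dist_sub_right x y v).symm
  rw [this]
  exact Metric.dist_le_diam_of_mem (unitCell_eq b ▸ ZSpan.fundamentalDomain_isBounded b) hx hy

lemma zero_mem_unitCell : (0 : EuclideanSpace ℝ (Fin n)) ∈ unitCellOf b := by
  intro i; simp [Set.mem_Ico]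

lemma self_mem_cell (v : EuclideanSpace ℝ (Fin n)) : v ∈ (v + ·) '' unitCellOf b := by
  rw [mem_cell_iff]; simpa using zero_mem_unitCell b

lemma lattice_inter_finite {T : Set (EuclideanSpace ℝ (Fin n))} (hT : Bornology.IsBounded T) :
    (latticeOf b ∩ T).Finite := by
  rw [lattice_eq]
  have hd : DiscreteTopology (span ℤ (Set.range ⇑b)) := inferInstance
  obtain ⟨R, hR⟩ := hT.subset_closedBall 0
  have h1 : (↑(span ℤ (Set.range ⇑b)) ∩ T : Set (EuclideanSpace ℝ (Fin n)))
      ⊆ ↑(span ℤ (Set.range ⇑b)) ∩ closedBall 0 R := inter_subset_inter_right _ hR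
  refine Set.Finite.subset ?_ h1
  have hclosed : IsClosed (↑(span ℤ (Set.range ⇑b)) : Set (EuclideanSpace ℝ (Fin n))) :=
    AddSubgroup.isClosed_of_discrete (H := (span ℤ (Set.range ⇑b)).toAddSubgroup)
  have hcpt : IsCompact (↑(span ℤ (Set.range ⇑b)) ∩ closedBall 0 R :
      Set (EuclideanSpace ℝ (Fin n))) :=
    (isCompact_closedBall 0 R).inter_left hclosed
  have : DiscreteTopology (↑(span ℤ (Set.range ⇑b)) ∩ closedBall 0 R :
      Set (EuclideanSpace ℝ (Fin n))) := by
    exact DiscreteTopology.of_subset hd (inter_subset_left)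
  exact hcpt.finite (isDiscrete_iff_discreteTopology.mpr this)

lemma cell_measurable (v : EuclideanSpace ℝ (Fin n)) :
    MeasurableSet ((v + ·) '' unitCellOf b) := by
  have : (v + ·) '' unitCellOf b = (· + (-v)) ⁻¹' unitCellOf b := by
    ext x
    rw [mem_cell_iff, Set.mem_preimage, ← sub_eq_add_neg]
  rw [this]
  exact (measurable_add_const (-v)) (unitCell_eq b ▸ ZSpan.fundamentalDomain_measurableSet b)

lemma cell_volume (v : EuclideanSpace ℝ (Fin n)) :
    volume ((v + ·) '' unitCellOf b) = volume (unitCellOf b) := by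
  have : (v + ·) '' unitCellOf b = (· + (-v)) ⁻¹' unitCellOf b := by
    ext x
    rw [mem_cell_iff, Set.mem_preimage, ← sub_eq_add_neg]
  rw [this]
  exact measure_preimage_add_right volume (-v) _

lemma cell_disjoint {v w : EuclideanSpace ℝ (Fin n)} (hv : v ∈ latticeOf b)
    (hw : w ∈ latticeOf b) (hvw : v ≠ w) :
    Disjoint ((v + ·) '' unitCellOf b) ((w + ·) '' unitCellOf b) := by
  rw [Set.disjoint_left]
  intro x hxv hxw
  obtain ⟨u, -, huniq⟩ := cell_partition b x
  exact hvw ((huniq v ⟨hv, hxv⟩).trans (huniq w ⟨hw, hxw⟩).symm)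

lemma meets_finite (p : EuclideanSpace ℝ (Fin n)) (r : ℝ) :
    {v | v ∈ latticeOf b ∧ (((v + ·) '' unitCellOf b) ∩ closedBall p r).Nonempty}.Finite := by
  refine Set.Finite.subset (lattice_inter_finite b
    (Metric.isBounded_closedBall (x := p) (r := Metric.diam (unitCellOf b) + r))) ?_
  rintro v ⟨hvL, y, hy1, hy2⟩
  refine ⟨hvL, ?_⟩
  rw [Metric.mem_closedBall]
  calc dist v p ≤ dist v y + dist y p := dist_triangle _ _ _
    _ ≤ Metric.diam (unitCellOf b) + r :=
      add_le_add (cell_dist_le b (self_mem_cell b v) hy1) (Metric.mem_closedBall.mp hy2)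

section Count

variable (S : Set (EuclideanSpace ℝ (Fin n))) (m : ℕ)

lemma cell_inter_finite (hm : 0 < m)
    (hUm : ∀ v ∈ latticeOf b, Nat.card ↥(S ∩ ((v + ·) '' unitCellOf b)) = m)
    {v : EuclideanSpace ℝ (Fin n)} (hv : v ∈ latticeOf b) :
    (S ∩ ((v + ·) '' unitCellOf b)).Finite := by
  have hpos : 0 < Nat.card ↥(S ∩ ((v + ·) '' unitCellOf b)) := (hUm v hv) ▸ hm
  exact Set.finite_coe_iff.mp (Nat.card_pos_iff.mp hpos).2

lemma count_union (hm : 0 < m)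
    (hUm : ∀ v ∈ latticeOf b, Nat.card ↥(S ∩ ((v + ·) '' unitCellOf b)) = m)
    (F : Finset (EuclideanSpace ℝ (Fin n))) (hF : ∀ v ∈ F, v ∈ latticeOf b) :
    (S ∩ ⋃ v ∈ F, (v + ·) '' unitCellOf b).Finite ∧
    (S ∩ ⋃ v ∈ F, (v + ·) '' unitCellOf b).ncard = m * F.card := by
  classical
  induction F using Finset.induction with
  | empty => simp
  | insert v F hvF ih =>
    have hvL : v ∈ latticeOf b := hF v (Finset.mem_insert_self v F)
    have hFL : ∀ w ∈ F, w ∈ latticeOf b := fun w hw => hF w (Finset.mem_insert_of_mem hw)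
    obtain ⟨ihfin, ihcard⟩ := ih hFL
    have hsplit : (S ∩ ⋃ w ∈ insert v F, (w + ·) '' unitCellOf b) =
        (S ∩ ((v + ·) '' unitCellOf b)) ∪ (S ∩ ⋃ w ∈ F, (w + ·) '' unitCellOf b) := by
      rw [Finset.set_biUnion_insert, Set.inter_union_distrib_left]
    have hdisj : Disjoint (S ∩ ((v + ·) '' unitCellOf b))
        (S ∩ ⋃ w ∈ F, (w + ·) '' unitCellOf b) := by
      rw [Set.disjoint_left]
      rintro x ⟨hxS, hxv⟩ ⟨-, hxU⟩
      rw [Set.mem_iUnion₂] at hxU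
      obtain ⟨w, hwF, hxw⟩ := hxU
      have hvw : v ≠ w := fun h => hvF (h ▸ hwF)
      exact Set.disjoint_left.mp (cell_disjoint b hvL (hFL w hwF) hvw) hxv hxw
    have hfin1 : (S ∩ ((v + ·) '' unitCellOf b)).Finite :=
      cell_inter_finite b S m hm hUm hvL
    constructor
    · rw [hsplit]; exact hfin1.union ihfin
    · rw [hsplit, Set.ncard_union_eq hdisj hfin1 ihfin, ihcard,
        Finset.card_insert_of_notMem hvF]
      have : (S ∩ ((v + ·) '' unitCellOf b)).ncard = m := by
        rw [← Nat.card_coe_set_eq]; exact hUm v hvL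
      rw [this]; ring

lemma volume_union (F : Finset (EuclideanSpace ℝ (Fin n))) (hF : ∀ v ∈ F, v ∈ latticeOf b) :
    volume (⋃ v ∈ F, (v + ·) '' unitCellOf b) = F.card * volume (unitCellOf b) := by
  rw [measure_biUnion_finset ?_ (fun v _ => cell_measurable b v)]
  · simp [cell_volume b, Finset.sum_const, nsmul_eq_mul]
  · intro v hv w hw hvw
    exact cell_disjoint b (hF v hv) (hF w hw) hvw

end Count

lemma cover_ball (p : EuclideanSpace ℝ (Fin n)) (R : ℝ)
    (F : Finset (EuclideanSpace ℝ (Fin n)))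
    (hF : ∀ v, v ∈ F ↔ (v ∈ latticeOf b ∧
      (((v + ·) '' unitCellOf b) ∩ closedBall p R).Nonempty)) :
    closedBall p R ⊆ ⋃ v ∈ F, (v + ·) '' unitCellOf b := by
  intro x hx
  obtain ⟨v, ⟨hvL, hxv⟩, -⟩ := cell_partition b x
  exact Set.mem_biUnion ((hF v).mpr ⟨hvL, ⟨x, hxv, hx⟩⟩) hxv

lemma repr_sub_apply (x y : EuclideanSpace ℝ (Fin n)) (i : Fin n) :
    b.repr (x - y) i = b.repr x i - b.repr y i := by
  rw [map_sub]; simp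

lemma strict_cover (hn : 0 < n) (p : EuclideanSpace ℝ (Fin n)) {R : ℝ} (hR : 0 ≤ R)
    (F : Finset (EuclideanSpace ℝ (Fin n)))
    (hF : ∀ v, v ∈ F ↔ (v ∈ latticeOf b ∧
      (((v + ·) '' unitCellOf b) ∩ closedBall p R).Nonempty)) :
    volume (closedBall p R) < F.card * volume (unitCellOf b) := by
  have hnefin : Nonempty (Fin n) := Fin.pos_iff_nonempty.mp hn
  -- the linear functional f = sum of coordinates
  set f : EuclideanSpace ℝ (Fin n) →ₗ[ℝ] ℝ := ∑ i, b.coord i with hf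
  have hfapply : ∀ x, f x = ∑ i, b.repr x i := by
    intro x
    rw [hf]
    simp [Module.Basis.coord_apply]
  have hfc : Continuous f := f.continuous_of_finiteDimensional
  -- maximizer q of f on the closed ball
  obtain ⟨q, hq, hmax⟩ := (isCompact_closedBall p R).exists_isMaxOn
    ⟨p, mem_closedBall_self hR⟩ hfc.continuousOn
  obtain ⟨v, ⟨hvL, hqv⟩, -⟩ := cell_partition b q
  have hvF : v ∈ F := (hF v).mpr ⟨hvL, ⟨q, hqv, hq⟩⟩
  have hqvU := (mem_cell_iff b).mp hqv
  have hqvi : ∀ i, 0 ≤ b.repr q i - b.repr v i ∧ b.repr q i - b.repr v i < 1 := by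
    intro i
    have := hqvU i
    rw [Set.mem_Ico] at this
    rwa [repr_sub_apply] at this
  -- the open set W
  set W : Set (EuclideanSpace ℝ (Fin n)) :=
    {x | ∀ i, b.repr x i ∈ Set.Ioo (b.repr q i) (b.repr v i + 1)} with hW
  have hWopen : IsOpen W := by
    have : W = ⋂ i, (fun x => b.repr x i) ⁻¹' Set.Ioo (b.repr q i) (b.repr v i + 1) := by
      ext x; simp [hW]
    rw [this]
    exact isOpen_iInter_of_finite fun i =>
      IsOpen.preimage (b.coord i).continuous_of_finiteDimensional isOpen_Ioo
  have hWne : W.Nonempty := by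
    refine ⟨b.equivFun.symm (fun i => (b.repr q i + (b.repr v i + 1)) / 2), fun i => ?_⟩
    have hrepr : b.repr (b.equivFun.symm fun i => (b.repr q i + (b.repr v i + 1)) / 2) i
        = (b.repr q i + (b.repr v i + 1)) / 2 := by
      rw [← b.equivFun_apply, LinearEquiv.apply_symm_apply]
    rw [hrepr]
    have h1 : b.repr q i < b.repr v i + 1 := by linarith [(hqvi i).2]
    constructor <;> [linarith; linarith]
  have hWv : W ⊆ (v + ·) '' unitCellOf b := by
    intro x hx
    rw [mem_cell_iff]
    intro i
    have h1 := hx i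
    rw [Set.mem_Ioo] at h1
    rw [repr_sub_apply, Set.mem_Ico]
    constructor
    · linarith [(hqvi i).1]
    · linarith
  have hWdisj : Disjoint W (closedBall p R) := by
    rw [Set.disjoint_left]
    intro x hxW hxB
    have h1 : f q < f x := by
      rw [hfapply, hfapply]
      refine Finset.sum_lt_sum_of_nonempty Finset.univ_nonempty fun i _ => (hxW i).1
    exact absurd (hmax hxB) (not_le.mpr h1)
  -- volume comparison
  have hsub : closedBall p R ∪ W ⊆ ⋃ v ∈ F, (v + ·) '' unitCellOf b :=
    Set.union_subset (cover_ball b p R F hF) (fun x hx => Set.mem_biUnion hvF (hWv hx))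
  calc volume (closedBall p R)
      < volume (closedBall p R) + volume W := by
        refine ENNReal.lt_add_right (measure_closedBall_lt_top).ne
          (hWopen.measure_pos volume hWne).ne'
    _ = volume (closedBall p R ∪ W) :=
        (measure_union' hWdisj.symm (measurableSet_closedBall)).symm
    _ ≤ volume (⋃ v ∈ F, (v + ·) '' unitCellOf b) := measure_mono hsub
    _ = F.card * volume (unitCellOf b) := volume_union b F fun v hv => ((hF v).mp hv).1

lemma volU_pos : 0 < (volume (unitCellOf b)).toReal := by
  rw [unitCell_eq]
  refine ENNReal.toReal_pos (ZSpan.measure_fundamentalDomain_ne_zero b) ?_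
  exact ((ZSpan.fundamentalDomain_isBounded b).measure_lt_top).ne

lemma volB_pos (hn : 0 < n) :
    0 < (volume (ball (0 : EuclideanSpace ℝ (Fin n)) 1)).toReal := by
  refine ENNReal.toReal_pos (measure_ball_pos volume 0 one_pos).ne' measure_ball_lt_top.ne

lemma vol_closedBall_toReal (p : EuclideanSpace ℝ (Fin n)) {t : ℝ} (ht : 0 ≤ t) :
    (volume (closedBall p t)).toReal
      = t ^ n * (volume (ball (0 : EuclideanSpace ℝ (Fin n)) 1)).toReal := by
  rw [Measure.addHaar_closedBall volume p ht, finrank_euclideanSpace_fin,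
    ENNReal.toReal_mul, ENNReal.toReal_ofReal (pow_nonneg ht n)]

lemma up_bound (S : Set (EuclideanSpace ℝ (Fin n))) (m : ℕ) (hm : 0 < m)
    (hUm : ∀ v ∈ latticeOf b, Nat.card ↥(S ∩ ((v + ·) '' unitCellOf b)) = m)
    (p : EuclideanSpace ℝ (Fin n)) {r : ℝ} (hr : 0 ≤ r) :
    (S ∩ closedBall p r).Finite ∧
    ((S ∩ closedBall p r).ncard : ℝ) * (volume (unitCellOf b)).toReal ≤
      m * ((r + Metric.diam (unitCellOf b)) ^ n *
        (volume (ball (0 : EuclideanSpace ℝ (Fin n)) 1)).toReal) := by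
  classical
  set d := Metric.diam (unitCellOf b) with hd
  have hd0 : 0 ≤ d := Metric.diam_nonneg
  set F : Finset (EuclideanSpace ℝ (Fin n)) := (meets_finite b p r).toFinset with hFdef
  have hFmem : ∀ v, v ∈ F ↔ (v ∈ latticeOf b ∧
      (((v + ·) '' unitCellOf b) ∩ closedBall p r).Nonempty) := by
    intro v; rw [hFdef, Set.Finite.mem_toFinset]; rfl
  have hFL : ∀ v ∈ F, v ∈ latticeOf b := fun v hv => ((hFmem v).mp hv).1
  have hsub : S ∩ closedBall p r ⊆ S ∩ ⋃ v ∈ F, (v + ·) '' unitCellOf b :=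
    Set.inter_subset_inter_right _ (cover_ball b p r F hFmem)
  obtain ⟨hfinU, hcardU⟩ := count_union b S m hm hUm F hFL
  have hfin : (S ∩ closedBall p r).Finite := hfinU.subset hsub
  refine ⟨hfin, ?_⟩
  have hcount : (S ∩ closedBall p r).ncard ≤ m * F.card := by
    rw [← hcardU]; exact Set.ncard_le_ncard hsub hfinU
  -- cells are inside the bigger ball
  have hcells : (⋃ v ∈ F, (v + ·) '' unitCellOf b) ⊆ closedBall p (r + d) := by
    intro x hx
    rw [Set.mem_iUnion₂] at hx
    obtain ⟨v, hvF, hxv⟩ := hx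
    obtain ⟨-, y, hy1, hy2⟩ := (hFmem v).mp hvF
    rw [Metric.mem_closedBall]
    calc dist x p ≤ dist x y + dist y p := dist_triangle _ _ _
      _ ≤ d + r := add_le_add (cell_dist_le b hxv hy1) (Metric.mem_closedBall.mp hy2)
      _ = r + d := add_comm _ _
  have hvol : (F.card : ℝ≥0∞) * volume (unitCellOf b) ≤ volume (closedBall p (r + d)) := by
    rw [← volume_union b F hFL]; exact measure_mono hcells
  have hvolR : (F.card : ℝ) * (volume (unitCellOf b)).toReal ≤
      (r + d) ^ n * (volume (ball (0 : EuclideanSpace ℝ (Fin n)) 1)).toReal := by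
    rw [← vol_closedBall_toReal p (by linarith)]
    have := ENNReal.toReal_mono measure_closedBall_lt_top.ne hvol
    rwa [ENNReal.toReal_mul, ENNReal.toReal_natCast] at this
  have h1 : ((S ∩ closedBall p r).ncard : ℝ) * (volume (unitCellOf b)).toReal ≤
      (m : ℝ) * ((F.card : ℝ) * (volume (unitCellOf b)).toReal) := by
    rw [← mul_assoc, ← Nat.cast_mul]
    exact mul_le_mul_of_nonneg_right (Nat.cast_le.mpr hcount) ENNReal.toReal_nonneg
  exact h1.trans (mul_le_mul_of_nonneg_left hvolR (Nat.cast_nonneg m))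

lemma low_bound (hn : 0 < n) (S : Set (EuclideanSpace ℝ (Fin n))) (m : ℕ) (hm : 0 < m)
    (hUm : ∀ v ∈ latticeOf b, Nat.card ↥(S ∩ ((v + ·) '' unitCellOf b)) = m)
    (p : EuclideanSpace ℝ (Fin n)) {R : ℝ} (hR : 0 ≤ R) :
    m * (R ^ n * (volume (ball (0 : EuclideanSpace ℝ (Fin n)) 1)).toReal) <
      ((S ∩ closedBall p (R + Metric.diam (unitCellOf b))).ncard : ℝ) *
        (volume (unitCellOf b)).toReal := by
  classical
  set d := Metric.diam (unitCellOf b) with hd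
  have hd0 : 0 ≤ d := Metric.diam_nonneg
  set F : Finset (EuclideanSpace ℝ (Fin n)) := (meets_finite b p R).toFinset with hFdef
  have hFmem : ∀ v, v ∈ F ↔ (v ∈ latticeOf b ∧
      (((v + ·) '' unitCellOf b) ∩ closedBall p R).Nonempty) := by
    intro v; rw [hFdef, Set.Finite.mem_toFinset]; rfl
  have hFL : ∀ v ∈ F, v ∈ latticeOf b := fun v hv => ((hFmem v).mp hv).1
  -- strict volume bound
  have hstrict := strict_cover b hn p hR F hFmem
  have hsvR : R ^ n * (volume (ball (0 : EuclideanSpace ℝ (Fin n)) 1)).toReal <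
      (F.card : ℝ) * (volume (unitCellOf b)).toReal := by
    rw [← vol_closedBall_toReal p hR]
    have hne1 : volume (closedBall p R) ≠ ⊤ := measure_closedBall_lt_top.ne
    have hne2 : (F.card : ℝ≥0∞) * volume (unitCellOf b) ≠ ⊤ := by
      refine ENNReal.mul_ne_top (by simp) ?_
      rw [unitCell_eq]
      exact ((ZSpan.fundamentalDomain_isBounded b).measure_lt_top).ne
    have := (ENNReal.toReal_lt_toReal hne1 hne2).mpr hstrict
    rwa [ENNReal.toReal_mul, ENNReal.toReal_natCast] at this
  -- counting
  obtain ⟨hfinU, hcardU⟩ := count_union b S m hm hUm F hFL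
  have hcells : (⋃ v ∈ F, (v + ·) '' unitCellOf b) ⊆ closedBall p (R + d) := by
    intro x hx
    rw [Set.mem_iUnion₂] at hx
    obtain ⟨v, hvF, hxv⟩ := hx
    obtain ⟨-, y, hy1, hy2⟩ := (hFmem v).mp hvF
    rw [Metric.mem_closedBall]
    calc dist x p ≤ dist x y + dist y p := dist_triangle _ _ _
      _ ≤ d + R := add_le_add (cell_dist_le b hxv hy1) (Metric.mem_closedBall.mp hy2)
      _ = R + d := add_comm _ _
  have hsub : S ∩ ⋃ v ∈ F, (v + ·) '' unitCellOf b ⊆ S ∩ closedBall p (R + d) :=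
    Set.inter_subset_inter_right _ hcells
  have hfinBig : (S ∩ closedBall p (R + d)).Finite :=
    (up_bound b S m hm hUm p (by linarith)).1
  have hcount : m * F.card ≤ (S ∩ closedBall p (R + d)).ncard := by
    rw [← hcardU]; exact Set.ncard_le_ncard hsub hfinBig
  calc (m : ℝ) * (R ^ n * (volume (ball (0 : EuclideanSpace ℝ (Fin n)) 1)).toReal)
      < (m : ℝ) * ((F.card : ℝ) * (volume (unitCellOf b)).toReal) := by
        refine mul_lt_mul_of_pos_left hsvR (by exact_mod_cast hm)
    _ = ((m * F.card : ℕ) : ℝ) * (volume (unitCellOf b)).toReal := by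
        push_cast; ring
    _ ≤ _ := mul_le_mul_of_nonneg_right (Nat.cast_le.mpr hcount) ENNReal.toReal_nonneg

end Aux

/-- Distance bounds: for a `(U,m)`-set `S ⊂ ℝⁿ` with unit cell `U` of diameter `d` and point
packing coefficient `c(S) = (Vol(U)/(m·Vₙ))^{1/n}`, every point `p ∈ S` and `k ≥ 1` satisfy
`c(S)·k^{1/n} − d < d_k(S;p) ≤ c(S)·k^{1/n} + d`. -/
theorem distance_bounds {n : ℕ} (hn : 0 < n)
    (b : Module.Basis (Fin n) ℝ (EuclideanSpace ℝ (Fin n)))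
    (S : Set (EuclideanSpace ℝ (Fin n))) (m : ℕ) (hm : 0 < m)
    (hUm : ∀ v ∈ latticeOf b, Nat.card ↥(S ∩ ((v + ·) '' unitCellOf b)) = m)
    (d c : ℝ) (hd : d = Metric.diam (unitCellOf b))
    (hc : c = ((volume (unitCellOf b)).toReal /
      (m * (volume (Metric.ball (0 : EuclideanSpace ℝ (Fin n)) 1)).toReal)) ^ ((1 : ℝ) / n))
    (p : EuclideanSpace ℝ (Fin n)) (hp : p ∈ S) (k : ℕ) (hk : 1 ≤ k) :
    c * (k : ℝ) ^ ((1 : ℝ) / n) - d < kthNNDist S p k ∧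
    kthNNDist S p k ≤ c * (k : ℝ) ^ ((1 : ℝ) / n) + d := by
  have hn0 : (n : ℝ) ≠ 0 := Nat.cast_ne_zero.mpr hn.ne'
  set vU := (volume (unitCellOf b)).toReal with hvU
  set VB := (volume (ball (0 : EuclideanSpace ℝ (Fin n)) 1)).toReal with hVB
  have hvU0 : 0 < vU := volU_pos b
  have hVB0 : 0 < VB := volB_pos (n := n) hn
  have hd0 : 0 ≤ d := hd ▸ Metric.diam_nonneg
  have hm0 : (0 : ℝ) < m := Nat.cast_pos.mpr hm
  have hbase : (0 : ℝ) < vU / (m * VB) := div_pos hvU0 (by positivity)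
  have hc0 : 0 < c := by rw [hc]; exact Real.rpow_pos_of_pos hbase _
  have hcn : c ^ n = vU / (m * VB) := by
    rw [hc, ← Real.rpow_natCast _ n, ← Real.rpow_mul hbase.le, one_div,
      inv_mul_cancel₀ hn0, Real.rpow_one]
  have key : ∀ j : ℕ, (m : ℝ) * ((c * (j : ℝ) ^ ((1 : ℝ) / n)) ^ n * VB) = j * vU := by
    intro j
    have hj : ((j : ℝ) ^ ((1 : ℝ) / n)) ^ n = (j : ℝ) := by
      rw [← Real.rpow_natCast ((j : ℝ) ^ ((1 : ℝ) / n)) n,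
        ← Real.rpow_mul (Nat.cast_nonneg j), one_div, inv_mul_cancel₀ hn0, Real.rpow_one]
    rw [mul_pow, hj, hcn]
    field_simp
  -- the defining set
  set T := {r : ℝ | k ≤ Nat.card ↥((S \ {p}) ∩ Metric.closedBall p r)} with hT
  have hTnonneg : ∀ r ∈ T, 0 ≤ r := by
    intro r hr
    by_contra hlt
    push_neg at hlt
    rw [hT, Set.mem_setOf_eq, Metric.closedBall_eq_empty.mpr hlt] at hr
    simp at hr
    omega
  have hNA : ∀ r : ℝ, 0 ≤ r → Nat.card ↥((S \ {p}) ∩ Metric.closedBall p r) =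
      (S ∩ closedBall p r).ncard - 1 := by
    intro r hr
    have hset : (S \ {p}) ∩ Metric.closedBall p r = (S ∩ closedBall p r) \ {p} := by
      ext x; simp only [Set.mem_inter_iff, Set.mem_diff, Set.mem_singleton_iff]; tauto
    rw [hset, Nat.card_coe_set_eq,
      Set.ncard_diff_singleton_of_mem
        (show p ∈ S ∩ closedBall p r from ⟨hp, mem_closedBall_self hr⟩)]
  -- the upper radius is in T
  set R : ℝ := c * (k : ℝ) ^ ((1 : ℝ) / n) with hR
  have hR0 : 0 ≤ R := by positivity
  have hmemT : R + d ∈ T := by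
    have hlow := low_bound b hn S m hm hUm p (R := R) hR0
    rw [← hd, ← hvU, ← hVB] at hlow
    have key' : (m : ℝ) * (R ^ n * VB) = (k : ℝ) * vU := key k
    rw [key'] at hlow
    have hA : k < (S ∩ closedBall p (R + d)).ncard := by
      have := (mul_lt_mul_iff_left₀ hvU0).mp hlow
      exact_mod_cast this
    rw [hT, Set.mem_setOf_eq, hNA (R + d) (by positivity)]
    omega
  have hbdd : BddBelow T := ⟨0, fun r hr => hTnonneg r hr⟩
  constructor
  · -- lower bound
    have hlb : ∀ r ∈ T, c * ((k + 1 : ℕ) : ℝ) ^ ((1 : ℝ) / n) - d ≤ r := by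
      intro r hrT
      have hr0 : 0 ≤ r := hTnonneg r hrT
      obtain ⟨hfin, hub⟩ := up_bound b S m hm hUm p hr0
      rw [← hd, ← hvU, ← hVB] at hub
      have hA : k + 1 ≤ (S ∩ closedBall p r).ncard := by
        have h1 : k ≤ (S ∩ closedBall p r).ncard - 1 := by
          rw [hT, Set.mem_setOf_eq, hNA r hr0] at hrT; exact hrT
        have h2 : 0 < (S ∩ closedBall p r).ncard :=
          (Set.ncard_pos hfin).mpr ⟨p, hp, mem_closedBall_self hr0⟩
        omega
      have h3 : ((k + 1 : ℕ) : ℝ) * vU ≤ (m : ℝ) * ((r + d) ^ n * VB) := by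
        refine le_trans ?_ hub
        exact mul_le_mul_of_nonneg_right (by exact_mod_cast hA) hvU0.le
      rw [← key (k + 1)] at h3
      have h4 : (c * ((k + 1 : ℕ) : ℝ) ^ ((1 : ℝ) / n)) ^ n * VB ≤ (r + d) ^ n * VB :=
        (mul_le_mul_iff_right₀ hm0).mp h3
      have h5 : (c * ((k + 1 : ℕ) : ℝ) ^ ((1 : ℝ) / n)) ^ n ≤ (r + d) ^ n :=
        (mul_le_mul_iff_left₀ hVB0).mp h4
      have h6 : c * ((k + 1 : ℕ) : ℝ) ^ ((1 : ℝ) / n) ≤ r + d := by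
        refine le_of_pow_le_pow_left₀ hn.ne' (by linarith) h5
      linarith
    have hsInf : c * ((k + 1 : ℕ) : ℝ) ^ ((1 : ℝ) / n) - d ≤ kthNNDist S p k :=
      le_csInf ⟨R + d, hmemT⟩ hlb
    have hstrict : c * (k : ℝ) ^ ((1 : ℝ) / n) < c * ((k + 1 : ℕ) : ℝ) ^ ((1 : ℝ) / n) := by
      refine mul_lt_mul_of_pos_left ?_ hc0
      refine Real.rpow_lt_rpow (Nat.cast_nonneg k) (by exact_mod_cast lt_add_one k)
        (by positivity)
    linarith
  · -- upper bound
    exact csInf_le hbdd hmemT
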